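/- Let T ⊂ ℝ² be a bounded open set, x_T ∈ T, and k ≥ 0 an integer. The map div : (x − x_T)·ℙ^{k+1}(T) → ℙ^{k+1}(T), where (x − x_T)·ℙ^{k+1}(T) = { (x − x_T) q : q ∈ ℙ^{k+1}(T) }, is a linear isomorphism. Here for q a scalar polynomial of total degree ≤ k+1, div((x − x_T)q) = 2q + (x − x_T)·∇q. -/

import Mathlib

open MvPolynomial

noncomputable section Aux

/-- The shift substitution `X j ↦ X j + c j`. -/
def shiftP (c : Fin 2 → ℝ) : MvPolynomial (Fin 2) ℝ →ₐ[ℝ] MvPolynomial (Fin 2) ℝ :=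
  aeval (fun j => X j + C (c j))

lemma shiftP_shiftP (c c' : Fin 2 → ℝ) (p : MvPolynomial (Fin 2) ℝ) :
    shiftP c (shiftP c' p) = shiftP (c + c') p := by
  unfold shiftP
  rw [← AlgHom.comp_apply, comp_aeval]
  have h : (fun i => (aeval fun j => X j + C (c j)) ((X i : MvPolynomial (Fin 2) ℝ) + C (c' i)))
      = fun j => (X j : MvPolynomial (Fin 2) ℝ) + C ((c + c') j) := by
    funext j
    simp [add_assoc]
  rw [h]

lemma shiftP_neg (c : Fin 2 → ℝ) (p : MvPolynomial (Fin 2) ℝ) :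
    shiftP c (shiftP (-c) p) = p := by
  rw [shiftP_shiftP, add_neg_cancel]
  unfold shiftP
  simp [aeval_X_left_apply]

lemma pderiv_shiftP (c : Fin 2 → ℝ) (i : Fin 2) (p : MvPolynomial (Fin 2) ℝ) :
    pderiv i (shiftP c p) = shiftP c (pderiv i p) := by
  unfold shiftP
  induction p using MvPolynomial.induction_on with
  | C a => simp
  | add p q hp hq => simp only [map_add, hp, hq]
  | mul_X p j hp =>
      simp only [map_mul, pderiv_mul, hp, aeval_X, map_add]
      by_cases h : i = j <;> simp [h, pderiv_X, Pi.single_apply]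

lemma totalDegree_shiftP_le (c : Fin 2 → ℝ) (p : MvPolynomial (Fin 2) ℝ) :
    (shiftP c p).totalDegree ≤ p.totalDegree := by
  conv_lhs => rw [p.as_sum]
  rw [map_sum]
  refine totalDegree_finsetSum_le fun v hv => ?_
  unfold shiftP
  rw [aeval_monomial]
  refine (totalDegree_mul _ _).trans ?_
  have h1 : (algebraMap ℝ (MvPolynomial (Fin 2) ℝ) (coeff v p)).totalDegree = 0 := by
    simp [algebraMap_eq, totalDegree_C]
  rw [h1, zero_add]
  refine le_trans ?_ (le_totalDegree hv)
  rw [Finsupp.prod]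
  refine (totalDegree_finset_prod _ _).trans ?_
  rw [Finsupp.sum]
  refine Finset.sum_le_sum fun j _ => ?_
  refine (totalDegree_pow _ _).trans ?_
  have : (X j + C (c j) : MvPolynomial (Fin 2) ℝ).totalDegree ≤ 1 := by
    refine (totalDegree_add _ _).trans ?_
    simp [totalDegree_X, totalDegree_C]
  calc v j * (X j + C (c j) : MvPolynomial (Fin 2) ℝ).totalDegree ≤ v j * 1 :=
        Nat.mul_le_mul_left _ this
    _ = v j := by ring





def eulerOp (p : MvPolynomial (Fin 2) ℝ) : MvPolynomial (Fin 2) ℝ :=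
  2 • p + ∑ i : Fin 2, X i * pderiv i p

lemma X_mul_pderiv_monomial (i : Fin 2) (v : Fin 2 →₀ ℕ) (a : ℝ) :
    X i * pderiv i (monomial v a) = (v i : ℝ) • monomial v a := by
  rw [pderiv_monomial]
  by_cases h : v i = 0
  · simp [h]
  · rw [X, monomial_mul, one_mul]
    have hle : Finsupp.single i 1 ≤ v := by
      rw [Finsupp.single_le_iff]; omega
    rw [add_tsub_cancel_of_le hle, smul_monomial]
    congr 1
    rw [smul_eq_mul]
    ring

lemma coeff_eulerOp (p : MvPolynomial (Fin 2) ℝ) (s : Fin 2 →₀ ℕ) :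
    coeff s (eulerOp p) = (2 + s 0 + s 1 : ℝ) * coeff s p := by
  induction p using MvPolynomial.induction_on' with
  | monomial v a =>
      unfold eulerOp
      rw [Fin.sum_univ_two, X_mul_pderiv_monomial, X_mul_pderiv_monomial]
      have h2 : ∀ r : MvPolynomial (Fin 2) ℝ, coeff s (2 • r) = 2 * coeff s r := fun r => by
        rw [two_smul, coeff_add]; ring
      rw [coeff_add, coeff_add, h2, coeff_smul, coeff_smul]
      by_cases h : v = s
      · subst h
        simp only [coeff_monomial, if_pos rfl, smul_eq_mul]
        ring
      · simp [coeff_monomial, h]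
  | add p q hp hq =>
      unfold eulerOp at *
      simp only [smul_add, map_add, mul_add, Finset.sum_add_distrib, coeff_add] at *
      linarith [hp, hq]

def eulerInv (p : MvPolynomial (Fin 2) ℝ) : MvPolynomial (Fin 2) ℝ :=
  ∑ v ∈ p.support, monomial v (coeff v p / (2 + v 0 + v 1))

lemma coeff_eulerInv (p : MvPolynomial (Fin 2) ℝ) (s : Fin 2 →₀ ℕ) :
    coeff s (eulerInv p) = coeff s p / (2 + s 0 + s 1) := by
  rw [eulerInv, coeff_sum]
  simp only [coeff_monomial]
  rw [Finset.sum_ite_eq' p.support s]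
  by_cases h : s ∈ p.support
  · simp [h]
  · rw [notMem_support_iff] at h
    simp [h]

lemma denom_ne_zero (s : Fin 2 →₀ ℕ) : (2 + s 0 + s 1 : ℝ) ≠ 0 := by positivity

lemma eulerOp_eulerInv (p : MvPolynomial (Fin 2) ℝ) : eulerOp (eulerInv p) = p := by
  ext s
  rw [coeff_eulerOp, coeff_eulerInv, mul_div_cancel₀ _ (denom_ne_zero s)]

lemma eulerOp_inj (p : MvPolynomial (Fin 2) ℝ) (h : eulerOp p = 0) : p = 0 := by
  ext s
  have := congrArg (coeff s) h
  rw [coeff_eulerOp, coeff_zero] at this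
  have := mul_eq_zero.mp this
  rcases this with h' | h'
  · exact absurd h' (denom_ne_zero s)
  · simpa using h'

lemma totalDegree_eulerOp_le (p : MvPolynomial (Fin 2) ℝ) :
    (eulerOp p).totalDegree ≤ p.totalDegree := by
  refine MvPolynomial.totalDegree_le_of_support_subset fun s hs => ?_
  rw [mem_support_iff] at *
  intro h0
  exact hs (by rw [coeff_eulerOp, h0, mul_zero])

lemma totalDegree_eulerInv_le (p : MvPolynomial (Fin 2) ℝ) :
    (eulerInv p).totalDegree ≤ p.totalDegree := by
  refine MvPolynomial.totalDegree_le_of_support_subset fun s hs => ?_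
  rw [mem_support_iff] at *
  intro h0
  exact hs (by rw [coeff_eulerInv, h0, zero_div])


lemma D_conj (xT : Fin 2 → ℝ) (q : MvPolynomial (Fin 2) ℝ) :
    2 • q + ∑ i : Fin 2, (X i - C (xT i)) * pderiv i q
      = shiftP (-xT) (eulerOp (shiftP xT q)) := by
  have hqq : shiftP (-xT) (shiftP xT q) = q := by
    have := shiftP_neg (-xT) q
    rwa [neg_neg] at this
  rw [eulerOp, map_add, map_sum]
  congr 1
  · rw [map_nsmul, hqq]
  · refine Finset.sum_congr rfl fun i _ => ?_
    rw [map_mul, ← pderiv_shiftP, hqq]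
    congr 1
    rw [show (shiftP (-xT)) (X i) = X i + C (-(xT i)) by simp [shiftP, aeval_X]]
    rw [map_neg, sub_eq_add_neg]

end Aux

/-- The divergence is an isomorphism from `(x − x_T)·ℙ^{k+1}(T)` onto `ℙ^{k+1}(T)`:
identifying `(x − x_T)q` with `q`, the map `q ↦ div((x − x_T)q) = 2q + (x − x_T)·∇q`
preserves the space of polynomials of total degree `≤ k+1`, is injective and surjective. -/
theorem stmt_7
    (k : ℕ) (T : Set (Fin 2 → ℝ)) (hTopen : IsOpen T) (hTbdd : Bornology.IsBounded T)
    (xT : Fin 2 → ℝ) (hxT : xT ∈ T)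
    (D : MvPolynomial (Fin 2) ℝ → MvPolynomial (Fin 2) ℝ)
    (hD : ∀ q, D q = 2 • q + ∑ i : Fin 2, (X i - C (xT i)) * pderiv i q) :
    (∀ q : MvPolynomial (Fin 2) ℝ, q.totalDegree ≤ k + 1 → (D q).totalDegree ≤ k + 1) ∧
    (∀ q : MvPolynomial (Fin 2) ℝ, q.totalDegree ≤ k + 1 → D q = 0 → q = 0) ∧
    (∀ p : MvPolynomial (Fin 2) ℝ, p.totalDegree ≤ k + 1 →
      ∃ q : MvPolynomial (Fin 2) ℝ, q.totalDegree ≤ k + 1 ∧ D q = p) := by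
  refine ⟨?_, ?_, ?_⟩
  · intro q hq
    rw [hD, D_conj]
    exact (totalDegree_shiftP_le _ _).trans <| (totalDegree_eulerOp_le _).trans <|
      (totalDegree_shiftP_le _ _).trans hq
  · intro q _ h
    rw [hD, D_conj] at h
    have h1 : eulerOp (shiftP xT q) = 0 := by
      have := congrArg (shiftP xT) h
      rwa [shiftP_neg, map_zero] at this
    have h2 : shiftP xT q = 0 := eulerOp_inj _ h1
    have h3 := congrArg (shiftP (-xT)) h2
    rw [map_zero] at h3
    have hqq : shiftP (-xT) (shiftP xT q) = q := by
      have := shiftP_neg (-xT) q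
      rwa [neg_neg] at this
    rw [hqq] at h3
    exact h3
  · intro p hp
    refine ⟨shiftP (-xT) (eulerInv (shiftP xT p)), ?_, ?_⟩
    · exact (totalDegree_shiftP_le _ _).trans <| (totalDegree_eulerInv_le _).trans <|
        (totalDegree_shiftP_le _ _).trans hp
    · rw [hD, D_conj, shiftP_neg xT _, eulerOp_eulerInv]
      have := shiftP_neg (-xT) p
      rwa [neg_neg] at this
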